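/- If V is a homogeneous subspace of C[x_{ij}], then the polarization closure of the derivative closure of V equals the derivative closure of the polarization closure of V: E(D(V)) = D(E(V)). -/

import Mathlib

open MvPolynomial

variable (ℓ n : ℕ)

/-- `V` is closed under all partial derivatives `∂/∂x_{ij}`. -/
def ClosedUnderDeriv (V : Submodule ℂ (MvPolynomial (Fin ℓ × Fin n) ℂ)) : Prop :=
  ∀ g ∈ V, ∀ v : Fin ℓ × Fin n, pderiv v g ∈ V

/-- `V` is closed under all generalized polarization operators
`E_{i,k}^{(p)}(g) = Σ_j x_{ij} ∂^p g / ∂x_{kj}^p`. -/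
def ClosedUnderPolarization (V : Submodule ℂ (MvPolynomial (Fin ℓ × Fin n) ℂ)) : Prop :=
  ∀ g ∈ V, ∀ i k : Fin ℓ, ∀ p : ℕ, 1 ≤ p →
    (∑ j : Fin n, X (i, j) * ((pderiv (k, j)).toLinearMap ^ p) g) ∈ V

/-- The derivative closure `D(V)`: the smallest subspace containing `V`
closed under partial derivatives. -/
noncomputable def derivClosure (V : Submodule ℂ (MvPolynomial (Fin ℓ × Fin n) ℂ)) :
    Submodule ℂ (MvPolynomial (Fin ℓ × Fin n) ℂ) :=
  sInf {W | V ≤ W ∧ ClosedUnderDeriv ℓ n W}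

/-- The polarization closure `E(V)`: the smallest subspace containing `V`
closed under polarization operators. -/
noncomputable def polarClosure (V : Submodule ℂ (MvPolynomial (Fin ℓ × Fin n) ℂ)) :
    Submodule ℂ (MvPolynomial (Fin ℓ × Fin n) ℂ) :=
  sInf {W | V ≤ W ∧ ClosedUnderPolarization ℓ n W}

/-- `V` is a homogeneous subspace: it contains the `ℕ^ℓ`-multigraded homogeneous
components of all of its elements. -/
def IsMultiHomogeneousSubspace (V : Submodule ℂ (MvPolynomial (Fin ℓ × Fin n) ℂ)) : Prop :=
  ∀ g ∈ V, ∀ d : Fin ℓ →₀ ℕ,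
    weightedHomogeneousComponent (fun v : Fin ℓ × Fin n => Finsupp.single v.1 1) d g ∈ V

namespace PolarDerivAux

theorem pderiv_comm' {σ : Type*} [DecidableEq σ] (v w : σ) (f : MvPolynomial σ ℂ) :
    pderiv v (pderiv w f) = pderiv w (pderiv v f) := by
  have : ((pderiv v).toLinearMap ∘ₗ (pderiv w).toLinearMap :
      MvPolynomial σ ℂ →ₗ[ℂ] MvPolynomial σ ℂ)
      = ((pderiv w).toLinearMap ∘ₗ (pderiv v).toLinearMap :
      MvPolynomial σ ℂ →ₗ[ℂ] MvPolynomial σ ℂ) := by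
    apply MvPolynomial.linearMap_ext
    intro s
    ext a
    by_cases h : v = w
    · subst h; rfl
    · simp only [LinearMap.coe_comp, Function.comp_apply, LinearMap.coe_single,
        Derivation.coeFn_coe, Function.comp_apply, pderiv_monomial, LinearMap.comp_apply]
      rw [Finsupp.tsub_apply, Finsupp.tsub_apply, Finsupp.single_apply, Finsupp.single_apply]
      simp only [if_neg h, if_neg (Ne.symm h)]
      rw [tsub_tsub, tsub_tsub, add_comm]
      simp [Nat.sub_zero, mul_comm]
  exact LinearMap.congr_fun this f

variable {ℓ n : ℕ}

local notation "R" => MvPolynomial (Fin ℓ × Fin n) ℂ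

/-- one partial derivative as an endomorphism -/
noncomputable def Pd (v : Fin ℓ × Fin n) : Module.End ℂ R := (pderiv v).toLinearMap

/-- a word of partial derivatives -/
noncomputable def Dw : List (Fin ℓ × Fin n) → Module.End ℂ R
  | [] => 1
  | v :: t => Pd v * Dw t

@[simp] lemma Dw_nil (g : R) : Dw ([] : List (Fin ℓ × Fin n)) g = g := rfl

@[simp] lemma Dw_cons (v : Fin ℓ × Fin n) (t : List (Fin ℓ × Fin n)) (g : R) :
    Dw (v :: t) g = Pd v (Dw t g) := rfl

/-- the polarization operator as an endomorphism -/
noncomputable def PolOp (i k : Fin ℓ) (p : ℕ) : Module.End ℂ R :=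
  ∑ j : Fin n, (LinearMap.mulLeft ℂ (X (i, j))) * (Pd (k, j)) ^ p

lemma PolOp_apply (i k : Fin ℓ) (p : ℕ) (g : R) :
    PolOp i k p g = ∑ j : Fin n, X (i, j) * ((pderiv (k, j)).toLinearMap ^ p) g := by
  simp [PolOp, Pd, LinearMap.sum_apply, Module.End.mul_apply, LinearMap.mulLeft_apply]

lemma pd_pow_comm (v w : Fin ℓ × Fin n) (p : ℕ) (g : R) :
    Pd v ((Pd w ^ p) g) = (Pd w ^ p) (Pd v g) := by
  have hc : ∀ h : R, Pd v (Pd w h) = Pd w (Pd v h) := fun h => pderiv_comm' v w h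
  induction p with
  | zero => simp
  | succ q ih =>
      rw [pow_succ', Module.End.mul_apply, Module.End.mul_apply]
      rw [hc ((Pd w ^ q) g), ih]

/-- the fundamental commutator identity -/
lemma pd_polOp (a : Fin ℓ) (b : Fin n) (i k : Fin ℓ) (p : ℕ) (g : R) :
    Pd (a, b) (PolOp i k p g)
      = PolOp i k p (Pd (a, b) g) + if a = i then (Pd (k, b) ^ p) g else 0 := by
  classical
  rw [PolOp_apply, PolOp_apply]
  rw [show Pd (a,b) (∑ j : Fin n, X (i, j) * ((pderiv (k, j)).toLinearMap ^ p) g)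
      = ∑ j : Fin n, Pd (a,b) (X (i, j) * ((pderiv (k, j)).toLinearMap ^ p) g) from
    map_sum _ _ _]
  have hterm : ∀ j : Fin n,
      Pd (a,b) (X (i, j) * ((pderiv (k, j)).toLinearMap ^ p) g)
      = X (i, j) * ((pderiv (k, j)).toLinearMap ^ p) (Pd (a,b) g)
        + if (i, j) = (a, b) then (Pd (k, j) ^ p) g else 0 := by
    intro j
    have hpc : pderiv (a,b) (((pderiv (k,j)).toLinearMap ^ p) g)
        = ((pderiv (k,j)).toLinearMap ^ p) (pderiv (a,b) g) := pd_pow_comm (a,b) (k,j) p g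
    show pderiv (a,b) (X (i, j) * ((pderiv (k, j)).toLinearMap ^ p) g) = _
    rw [pderiv_mul, pderiv_X]
    by_cases h : (i, j) = (a, b)
    · rw [if_pos h, h, Pi.single_eq_same, one_mul, hpc, add_comm]
      rfl
    · rw [if_neg h, Pi.single_eq_of_ne h, zero_mul, zero_add, add_zero, hpc]
      rfl
  rw [Finset.sum_congr rfl fun j _ => hterm j, Finset.sum_add_distrib]
  congr 1
  by_cases hai : a = i
  · subst hai
    rw [if_pos rfl, Finset.sum_eq_single b]
    · rw [if_pos rfl]
    · intro j _ hj
      rw [if_neg]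
      rw [Prod.mk.injEq]
      exact fun hh => hj hh.2
    · intro hb; exact absurd (Finset.mem_univ b) hb
  · rw [if_neg hai]
    apply Finset.sum_eq_zero
    intro j _
    rw [if_neg]
    rw [Prod.mk.injEq]
    exact fun hh => hai hh.1.symm

section Closures

lemma le_derivClosure (V : Submodule ℂ R) : V ≤ derivClosure ℓ n V :=
  le_sInf fun _ hW => hW.1

lemma le_polarClosure (V : Submodule ℂ R) : V ≤ polarClosure ℓ n V :=
  le_sInf fun _ hW => hW.1

lemma derivClosure_closed (V : Submodule ℂ R) : ClosedUnderDeriv ℓ n (derivClosure ℓ n V) := by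
  intro g hg v
  rw [derivClosure, Submodule.mem_sInf] at hg ⊢
  intro W hW
  exact hW.2 g (hg W hW) v

lemma polarClosure_closed (V : Submodule ℂ R) :
    ClosedUnderPolarization ℓ n (polarClosure ℓ n V) := by
  intro g hg i k p hp
  rw [polarClosure, Submodule.mem_sInf] at hg ⊢
  intro W hW
  exact hW.2 g (hg W hW) i k p hp

lemma derivClosure_le {V W : Submodule ℂ R} (h1 : V ≤ W) (h2 : ClosedUnderDeriv ℓ n W) :
    derivClosure ℓ n V ≤ W := sInf_le ⟨h1, h2⟩

lemma polarClosure_le {V W : Submodule ℂ R} (h1 : V ≤ W) (h2 : ClosedUnderPolarization ℓ n W) :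
    polarClosure ℓ n V ≤ W := sInf_le ⟨h1, h2⟩

end Closures

lemma polOp_mem {U : Submodule ℂ R} (hU : ClosedUnderPolarization ℓ n U) {g : R} (hg : g ∈ U)
    (i k : Fin ℓ) (p : ℕ) (hp : 1 ≤ p) : PolOp i k p g ∈ U := by
  rw [PolOp_apply]; exact hU g hg i k p hp

lemma dw_mem {U : Submodule ℂ R} (hU : ClosedUnderDeriv ℓ n U) (t : List (Fin ℓ × Fin n))
    {g : R} (hg : g ∈ U) : Dw t g ∈ U := by
  induction t with
  | nil => simpa using hg
  | cons v t ih => rw [Dw_cons]; exact hU _ ih v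

/-- the span of all iterated partial derivatives of `g` -/
noncomputable def DSpan (g : R) : Submodule ℂ R :=
  Submodule.span ℂ (Set.range fun t => Dw t g)

lemma dw_mem_DSpan (t : List (Fin ℓ × Fin n)) (g : R) : Dw t g ∈ DSpan g :=
  Submodule.subset_span ⟨t, rfl⟩

lemma DSpan_map_mem {U : Submodule ℂ R} (f : Module.End ℂ R) (g : R)
    (h : ∀ t, f (Dw t g) ∈ U) : ∀ c ∈ DSpan g, f c ∈ U := by
  intro c hc
  refine Submodule.span_induction ?_ ?_ ?_ ?_ hc
  · rintro _ ⟨t, rfl⟩; exact h t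
  · simpa using U.zero_mem
  · intro x y _ _ hx hy; rw [map_add]; exact U.add_mem hx hy
  · intro a x _ hx; rw [map_smul]; exact U.smul_mem a hx

lemma DSpan_pd (v : Fin ℓ × Fin n) (g : R) {c : R} (hc : c ∈ DSpan g) : Pd v c ∈ DSpan g :=
  DSpan_map_mem (Pd v) g (fun t => dw_mem_DSpan (v :: t) g) c hc

lemma DSpan_pd_pow (w : Fin ℓ × Fin n) (p : ℕ) (g : R) {c : R} (hc : c ∈ DSpan g) :
    (Pd w ^ p) c ∈ DSpan g := by
  induction p with
  | zero => simpa using hc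
  | succ q ih => rw [pow_succ', Module.End.mul_apply]; exact DSpan_pd w g ih

/-- iterated commutation of a derivative word past a polarization operator -/
lemma lemC (i k : Fin ℓ) (p : ℕ) (g : R) (t : List (Fin ℓ × Fin n)) :
    Dw t (PolOp i k p g) - PolOp i k p (Dw t g) ∈ DSpan g := by
  induction t with
  | nil => simpa using (DSpan g).zero_mem
  | cons v t ih =>
      rw [Dw_cons, Dw_cons]
      obtain ⟨a, b⟩ := v
      have h1 : Dw t (PolOp i k p g)
          = PolOp i k p (Dw t g) + (Dw t (PolOp i k p g) - PolOp i k p (Dw t g)) := by ring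
      rw [h1, map_add, pd_polOp a b i k p (Dw t g)]
      have h2 : PolOp i k p ((Pd (a, b)) (Dw t g))
            + (if a = i then (Pd (k, b) ^ p) (Dw t g) else 0)
            + Pd (a, b) (Dw t (PolOp i k p g) - PolOp i k p (Dw t g))
            - PolOp i k p (Pd (a, b) (Dw t g))
          = (if a = i then (Pd (k, b) ^ p) (Dw t g) else 0)
            + Pd (a, b) (Dw t (PolOp i k p g) - PolOp i k p (Dw t g)) := by ring
      rw [h2]
      apply Submodule.add_mem
      · split
        · exact DSpan_pd_pow (k, b) p g (dw_mem_DSpan t g)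
        · exact (DSpan g).zero_mem
      · exact DSpan_pd (a, b) g ih

/-- one polarization operator (with exponent shifted so it is always `≥ 1`) -/
noncomputable def PolOp' (w : Fin ℓ × Fin ℓ × ℕ) : Module.End ℂ R :=
  PolOp w.1 w.2.1 (w.2.2 + 1)

/-- a word of polarization operators -/
noncomputable def Pw : List (Fin ℓ × Fin ℓ × ℕ) → Module.End ℂ R
  | [] => 1
  | w :: s => Pw s * PolOp' w

@[simp] lemma Pw_nil (g : R) : Pw ([] : List (Fin ℓ × Fin ℓ × ℕ)) g = g := rfl

@[simp] lemma Pw_cons (w : Fin ℓ × Fin ℓ × ℕ) (s : List (Fin ℓ × Fin ℓ × ℕ)) (g : R) :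
    Pw (w :: s) g = Pw s (PolOp' w g) := rfl

lemma pw_mem {U : Submodule ℂ R} (hU : ClosedUnderPolarization ℓ n U)
    (s : List (Fin ℓ × Fin ℓ × ℕ)) {g : R} (hg : g ∈ U) : Pw s g ∈ U := by
  induction s generalizing g with
  | nil => simpa using hg
  | cons w s ih =>
      rw [Pw_cons]
      exact ih (polOp_mem hU hg w.1 w.2.1 (w.2.2 + 1) (Nat.succ_le_succ (Nat.zero_le _)))

end PolarDerivAux

/-- For a homogeneous subspace `V`, `E(D(V)) = D(E(V))`. -/
theorem polarClosure_derivClosure_comm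
    (V : Submodule ℂ (MvPolynomial (Fin ℓ × Fin n) ℂ))
    (hV : IsMultiHomogeneousSubspace ℓ n V) :
    polarClosure ℓ n (derivClosure ℓ n V) = derivClosure ℓ n (polarClosure ℓ n V) := by
  classical
  open PolarDerivAux in
  set DV := derivClosure ℓ n V with hDV
  set EV := polarClosure ℓ n V with hEV
  set ED := polarClosure ℓ n DV with hED
  set DE := derivClosure ℓ n EV with hDE
  have hDVd : ClosedUnderDeriv ℓ n DV := derivClosure_closed V
  have hEVp : ClosedUnderPolarization ℓ n EV := polarClosure_closed V
  have hEDp : ClosedUnderPolarization ℓ n ED := polarClosure_closed DV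
  have hDEd : ClosedUnderDeriv ℓ n DE := derivClosure_closed EV
  -- `E(D(V))` is closed under derivatives
  have hEDd : ClosedUnderDeriv ℓ n ED := by
    set W : Submodule ℂ (MvPolynomial (Fin ℓ × Fin n) ℂ) :=
      ⨅ t : List (Fin ℓ × Fin n), ED.comap (Dw t) with hW
    have memW : ∀ g, g ∈ W ↔ ∀ t, Dw t g ∈ ED := by
      intro g
      simp [hW, Submodule.mem_iInf, Submodule.mem_comap]
    have hle : ED ≤ W := by
      refine polarClosure_le ?_ ?_
      · intro g hg
        rw [memW]
        intro t
        exact le_polarClosure DV (dw_mem hDVd t hg)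
      · intro g hg i k p hp
        rw [← PolOp_apply, memW]
        intro t
        have hg' := (memW g).mp hg
        have h1 : Dw t (PolOp i k p g) - PolOp i k p (Dw t g) ∈ DSpan g := lemC i k p g t
        have h2 : (1 : Module.End ℂ (MvPolynomial (Fin ℓ × Fin n) ℂ))
            (Dw t (PolOp i k p g) - PolOp i k p (Dw t g)) ∈ ED :=
          DSpan_map_mem 1 g (fun u => by simpa using hg' u) _ h1
        have h3 : PolOp i k p (Dw t g) ∈ ED := polOp_mem hEDp (hg' t) i k p hp
        have h4 := ED.add_mem (by simpa using h2) h3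
        simpa using h4
    intro g hg v
    have := (memW g).mp (hle hg) [v]
    simpa [Pd] using this
  -- `D(E(V))` is closed under polarization
  have hDEp : ClosedUnderPolarization ℓ n DE := by
    set W : Submodule ℂ (MvPolynomial (Fin ℓ × Fin n) ℂ) :=
      ⨅ s : List (Fin ℓ × Fin ℓ × ℕ), DE.comap (Pw s) with hW
    have memW : ∀ g, g ∈ W ↔ ∀ s, Pw s g ∈ DE := by
      intro g
      simp [hW, Submodule.mem_iInf, Submodule.mem_comap]
    have S : ∀ s : List (Fin ℓ × Fin ℓ × ℕ), ∀ g, (∀ s', Pw s' g ∈ DE) →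
        ∀ t, Pw s (Dw t g) ∈ DE := by
      intro s
      induction s with
      | nil =>
          intro g hg t
          have h0 : g ∈ DE := by simpa using hg []
          simpa using dw_mem hDEd t h0
      | cons w s ih =>
          intro g hg t
          rw [Pw_cons]
          have h1 : Dw t (PolOp' w g) - PolOp' w (Dw t g) ∈ DSpan g :=
            lemC w.1 w.2.1 (w.2.2 + 1) g t
          have e : PolOp' w (Dw t g)
              = Dw t (PolOp' w g) - (Dw t (PolOp' w g) - PolOp' w (Dw t g)) := by ring
          rw [e, map_sub]
          apply Submodule.sub_mem
          · exact ih (PolOp' w g) (fun s' => hg (w :: s')) t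
          · exact DSpan_map_mem (Pw s) g (fun u => ih g hg u) _ h1
    have hle : DE ≤ W := by
      refine derivClosure_le ?_ ?_
      · intro g hg
        rw [memW]
        intro s
        exact le_derivClosure EV (pw_mem hEVp s hg)
      · intro g hg v
        rw [memW]
        intro s
        have := S s g ((memW g).mp hg) [v]
        simpa [Pd] using this
    intro g hg i k p hp
    rw [← PolOp_apply]
    have hg' := (memW g).mp (hle hg)
    obtain ⟨q, rfl⟩ : ∃ q, p = q + 1 := ⟨p - 1, (Nat.succ_pred_eq_of_pos hp).symm⟩
    have := hg' [(i, k, q)]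
    simpa [PolOp'] using this
  apply le_antisymm
  · refine polarClosure_le ?_ hDEp
    exact derivClosure_le (le_trans (le_polarClosure V) (le_derivClosure EV)) hDEd
  · refine derivClosure_le ?_ hEDd
    exact polarClosure_le (le_trans (le_derivClosure V) (le_polarClosure DV)) hEDp
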